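/- Let ω : ℕ → (0, ∞) and let H_ω be the Hilbert space of sequences a : ℕ → ℂ with ‖a‖² = ∑_{n≥0} ω_n |a_n|² < ∞. Suppose the two-step shift T, defined by (Ta)_n = a_{n−2} for n ≥ 2 and (Ta)_0 = (Ta)_1 = 0, is bounded on H_ω. Then the inequality ‖x + Ty‖² ≤ 2(‖Tx‖² + ‖y‖²) holds for all x, y ∈ H_ω if and only if all of the following hold: (a) ω_0 ≤ 2ω_2; (b) ω_1 ≤ 2ω_3; (c) 1/ω_{n−2} + 1/ω_{n+2} ≤ 2/ω_n for all n ≥ 2. -/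

import Mathlib

open MeasureTheory
open scoped ENNReal

/-- The measure on `ℕ` giving the singleton `{n}` mass `ω n`. -/
noncomputable def weightMeasure (ω : ℕ → ℝ) : Measure ℕ :=
  Measure.count.withDensity (fun n => ENNReal.ofReal (ω n))

attribute [irreducible] weightMeasure

/-- The weighted `ℓ²` space `H_ω` with `‖a‖² = ∑ ωₙ |aₙ|²`. -/
noncomputable abbrev Hweighted (ω : ℕ → ℝ) : Type := Lp ℂ 2 (weightMeasure ω)


unseal weightMeasure in
lemma wm_lintegral (ω : ℕ → ℝ) (f : ℕ → ℝ≥0∞) :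
    ∫⁻ n, f n ∂(weightMeasure ω) = ∑' n, ENNReal.ofReal (ω n) * f n := by
  rw [weightMeasure, lintegral_withDensity_eq_lintegral_mul _ (measurable_of_countable _)
    (measurable_of_countable _), lintegral_count]
  rfl

lemma wm_singleton (ω : ℕ → ℝ) (n : ℕ) : weightMeasure ω {n} = ENNReal.ofReal (ω n) := by
  have h := lintegral_indicator_one (μ := weightMeasure ω) (MeasurableSet.singleton n)
  rw [wm_lintegral] at h
  rw [← h, tsum_eq_single n]
  · simp
  · intro m hm
    simp [Set.indicator_of_notMem, hm]

lemma eLpNorm_sq (ω : ℕ → ℝ) (f : ℕ → ℂ) :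
    eLpNorm f 2 (weightMeasure ω) ^ 2 = ∑' n, ENNReal.ofReal (ω n) * (‖f n‖₊ : ℝ≥0∞) ^ 2 := by
  rw [eLpNorm_eq_lintegral_rpow_enorm_toReal (by norm_num) (by norm_num), wm_lintegral]
  rw [ENNReal.toReal_ofNat, ← ENNReal.rpow_natCast _ 2, ← ENNReal.rpow_mul]
  norm_num
  simp only [enorm_eq_nnnorm]

lemma wm_ae_eq {ω : ℕ → ℝ} (hω : ∀ n, 0 < ω n) {f g : ℕ → ℂ}
    (h : f =ᵐ[weightMeasure ω] g) : f = g := by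
  funext n
  by_contra hne
  have hs : weightMeasure ω {m | ¬ f m = g m} ≠ 0 := by
    intro h0
    have : weightMeasure ω {n} = 0 :=
      measure_mono_null (by intro m hm; simp_all) h0
    rw [wm_singleton] at this
    exact absurd this (by simp [ENNReal.ofReal_eq_zero, not_le, hω n])
  exact hs h

lemma norm_sq_eq {ω : ℕ → ℝ} (f : Hweighted ω) :
    ENNReal.ofReal (‖f‖ ^ 2) = ∑' n, ENNReal.ofReal (ω n) * (‖(f : ℕ → ℂ) n‖₊ : ℝ≥0∞) ^ 2 := by
  rw [← eLpNorm_sq, Lp.norm_def, ← ENNReal.toReal_pow,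
    ENNReal.ofReal_toReal]
  exact ENNReal.pow_ne_top (Lp.eLpNorm_ne_top f)

noncomputable def deltaFun (k : ℕ) : ℕ → ℂ := fun n => if n = k then (1 : ℂ) else 0

lemma delta_tsum (ω : ℕ → ℝ) (k : ℕ) :
    ∑' n, ENNReal.ofReal (ω n) * (‖deltaFun k n‖₊ : ℝ≥0∞) ^ 2 = ENNReal.ofReal (ω k) := by
  rw [tsum_eq_single k]
  · show ENNReal.ofReal (ω k) * (‖deltaFun k k‖₊ : ℝ≥0∞) ^ 2 = _
    simp [deltaFun]
  · intro m hm; simp [deltaFun, hm]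

lemma memLp_delta (ω : ℕ → ℝ) (k : ℕ) : MemLp (deltaFun k) 2 (weightMeasure ω) := by
  refine ⟨(measurable_of_countable _).aestronglyMeasurable, ?_⟩
  rw [lt_top_iff_ne_top]
  intro h
  have h2 := eLpNorm_sq ω (deltaFun k)
  rw [h, delta_tsum, pow_two, ENNReal.top_mul_top] at h2
  exact ENNReal.ofReal_ne_top h2.symm

noncomputable def eVec (ω : ℕ → ℝ) (k : ℕ) : Hweighted ω := (memLp_delta ω k).toLp _

lemma eVec_coe {ω : ℕ → ℝ} (hω : ∀ n, 0 < ω n) (k : ℕ) :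
    (eVec ω k : ℕ → ℂ) = deltaFun k := wm_ae_eq hω ((memLp_delta ω k).coeFn_toLp)

lemma eVec_normsq {ω : ℕ → ℝ} (hω : ∀ n, 0 < ω n) (k : ℕ) : ‖eVec ω k‖ ^ 2 = ω k := by
  have h := norm_sq_eq (eVec ω k)
  rw [eVec_coe hω, delta_tsum] at h
  rwa [ENNReal.ofReal_eq_ofReal_iff (by positivity) (hω k).le] at h

lemma tsum_split (g : ℕ → ℝ≥0∞) : ∑' n, g n = g 0 + g 1 + ∑' n, g (n + 2) := by
  have h1 : ∑' n, g n = g 0 + ∑' n, g (n + 1) := tsum_eq_zero_add' ENNReal.summable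
  have h2 : ∑' n, g (n + 1) = g 1 + ∑' n, g (n + 2) :=
    tsum_eq_zero_add' (f := fun n => g (n + 1)) ENNReal.summable
  rw [h1, h2, add_assoc]

lemma core_real {p q r s t : ℝ} (hp : 0 < p) (hq : 0 < q) (hr : 0 < r)
    (h : 1 / p + 1 / r ≤ 2 / q) (hs : 0 ≤ s) (ht : 0 ≤ t) :
    q * (s + t) ^ 2 ≤ 2 * r * s ^ 2 + 2 * p * t ^ 2 := by
  have hkey : q * (p + r) ≤ 2 * (p * r) := by
    rw [div_add_div _ _ hp.ne' hr.ne', div_le_div_iff₀ (by positivity) hq] at h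
    nlinarith
  nlinarith [sq_nonneg (r * s - p * t), mul_pos hp hr, sq_nonneg s, sq_nonneg t,
    mul_nonneg (mul_nonneg hq.le hs) ht]

lemma core_enn {p q r : ℝ} (hp : 0 < p) (hq : 0 < q) (hr : 0 < r)
    (h : 1 / p + 1 / r ≤ 2 / q) (a b : ℂ) :
    ENNReal.ofReal q * (‖a + b‖₊ : ℝ≥0∞) ^ 2 ≤
      2 * (ENNReal.ofReal r * (‖a‖₊ : ℝ≥0∞) ^ 2) + 2 * (ENNReal.ofReal p * (‖b‖₊ : ℝ≥0∞) ^ 2) := by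
  have hre : q * ‖a + b‖ ^ 2 ≤ 2 * r * ‖a‖ ^ 2 + 2 * p * ‖b‖ ^ 2 := by
    calc q * ‖a + b‖ ^ 2 ≤ q * (‖a‖ + ‖b‖) ^ 2 := by
          apply mul_le_mul_of_nonneg_left _ hq.le
          exact pow_le_pow_left₀ (norm_nonneg _) (norm_add_le a b) 2
    _ ≤ _ := core_real hp hq hr h (norm_nonneg a) (norm_nonneg b)
  have h1 : ∀ (c : ℝ) (z : ℂ), 0 ≤ c →
      ENNReal.ofReal c * (‖z‖₊ : ℝ≥0∞) ^ 2 = ENNReal.ofReal (c * ‖z‖ ^ 2) := by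
    intro c z hc
    rw [← enorm_eq_nnnorm, ← ofReal_norm, ← ENNReal.ofReal_pow (norm_nonneg _),
      ← ENNReal.ofReal_mul hc]
  rw [h1 _ _ hq.le, h1 _ _ hr.le, h1 _ _ hp.le,
    ← ENNReal.ofReal_ofNat 2, ← ENNReal.ofReal_mul (by norm_num),
    ← ENNReal.ofReal_mul (by norm_num), ← ENNReal.ofReal_add (by positivity) (by positivity)]
  apply ENNReal.ofReal_le_ofReal
  calc q * ‖a + b‖ ^ 2 ≤ 2 * r * ‖a‖ ^ 2 + 2 * p * ‖b‖ ^ 2 := hre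
  _ = 2 * (r * ‖a‖ ^ 2) + 2 * (p * ‖b‖ ^ 2) := by ring

/-- Shimorin's inequality for the two-step shift `T` on a weighted `ℓ²` space `H_ω`
holds iff (a) `ω₀ ≤ 2ω₂`, (b) `ω₁ ≤ 2ω₃`, and (c) `1/ω_{n-2} + 1/ω_{n+2} ≤ 2/ωₙ`
for all `n ≥ 2`. -/
theorem two_step_shift_shimorin_iff
    (ω : ℕ → ℝ) (hω : ∀ n, 0 < ω n)
    (T : Hweighted ω →L[ℂ] Hweighted ω)
    (hT : ∀ a : Hweighted ω, ∀ n : ℕ,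
      (T a : ℕ → ℂ) n = if 2 ≤ n then (a : ℕ → ℂ) (n - 2) else 0) :
    (∀ x y : Hweighted ω, ‖x + T y‖ ^ 2 ≤ 2 * (‖T x‖ ^ 2 + ‖y‖ ^ 2)) ↔
      (ω 0 ≤ 2 * ω 2 ∧ ω 1 ≤ 2 * ω 3 ∧
        ∀ n : ℕ, 2 ≤ n → 1 / ω (n - 2) + 1 / ω (n + 2) ≤ 2 / ω n) := by
  have hTe : ∀ k, T (eVec ω k) = eVec ω (k + 2) := by
    intro k
    apply Lp.ext (p := (2 : ℝ≥0∞))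
    apply Filter.EventuallyEq.of_eq
    funext n
    rw [hT (eVec ω k) n, eVec_coe hω, eVec_coe hω]
    by_cases h2 : 2 ≤ n
    · simp only [h2, if_pos, deltaFun]
      by_cases hk : n = k + 2
      · simp [hk]
      · rw [if_neg hk, if_neg (by omega)]
    · rw [if_neg h2, deltaFun, if_neg (by omega)]
  constructor
  · intro H
    refine ⟨?_, ?_, ?_⟩
    · have h := H (eVec ω 0) 0
      rw [map_zero, add_zero, hTe 0, eVec_normsq hω, eVec_normsq hω, norm_zero] at h
      linarith
    · have h := H (eVec ω 1) 0
      rw [map_zero, add_zero, hTe 1, eVec_normsq hω, eVec_normsq hω, norm_zero] at h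
      linarith
    · intro n hn
      obtain ⟨m, rfl⟩ : ∃ m, n = m + 2 := ⟨n - 2, by omega⟩
      have hp := hω m
      have hq := hω (m + 2)
      have hr := hω (m + 2 + 2)
      obtain ⟨s, hs⟩ : ∃ s : ℝ, s = 1 / ω (m + 2 + 2) := ⟨_, rfl⟩
      obtain ⟨t, ht⟩ : ∃ t : ℝ, t = 1 / ω m := ⟨_, rfl⟩
      have hspos : 0 < s := by rw [hs]; positivity
      have htpos : 0 < t := by rw [ht]; positivity
      have h := H ((s : ℂ) • eVec ω (m + 2)) ((t : ℂ) • eVec ω m)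
      rw [T.map_smul, T.map_smul, hTe, hTe] at h
      have hsum : (s : ℂ) • eVec ω (m + 2) + (t : ℂ) • eVec ω (m + 2)
          = ((s + t : ℝ) : ℂ) • eVec ω (m + 2) := by
        rw [← add_smul]; norm_cast
      rw [hsum, norm_smul, norm_smul, norm_smul, mul_pow, mul_pow, mul_pow,
        eVec_normsq hω, eVec_normsq hω, eVec_normsq hω, Complex.norm_real,
        Complex.norm_real, Complex.norm_real, Real.norm_eq_abs, Real.norm_eq_abs,
        Real.norm_eq_abs, sq_abs, sq_abs, sq_abs] at h
      -- h : (s + t)^2 * ω (m+2) ≤ 2 * (s^2 * ω (m+4) + t^2 * ω m)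
      have hgoal : 1 / ω m + 1 / ω (m + 2 + 2) ≤ 2 / ω (m + 2) := by
        rw [le_div_iff₀ hq]
        have hsr : s ^ 2 * ω (m + 2 + 2) = s := by rw [hs]; field_simp
        have htp : t ^ 2 * ω m = t := by rw [ht]; field_simp
        rw [hsr, htp] at h
        rw [hs, ht] at *
        nlinarith [sq_nonneg (1 / ω (m + 2 + 2) + 1 / ω m)]
      rw [show m + 2 - 2 = m from by omega]
      exact hgoal
  · rintro ⟨ha, hb, hc⟩ x y
    set W : ℕ → ℝ≥0∞ := fun n => ENNReal.ofReal (ω n) with hWdef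
    have hpt : ∀ n, ((x + T y : Hweighted ω) : ℕ → ℂ) n
        = (x : ℕ → ℂ) n + (if 2 ≤ n then (y : ℕ → ℂ) (n - 2) else 0) := by
      intro n
      have hcoe := wm_ae_eq hω (Lp.coeFn_add x (T y))
      rw [hcoe]
      simp only [Pi.add_apply]
      rw [hT y n]
    have hL : ENNReal.ofReal (‖x + T y‖ ^ 2)
        = W 0 * (‖(x : ℕ → ℂ) 0‖₊ : ℝ≥0∞) ^ 2 + W 1 * (‖(x : ℕ → ℂ) 1‖₊ : ℝ≥0∞) ^ 2
          + ∑' n, W (n + 2) * (‖(x : ℕ → ℂ) (n + 2) + (y : ℕ → ℂ) n‖₊ : ℝ≥0∞) ^ 2 := by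
      rw [norm_sq_eq]
      have h1 : ∀ n, W n * (‖((x + T y : Hweighted ω) : ℕ → ℂ) n‖₊ : ℝ≥0∞) ^ 2
          = W n * (‖(x : ℕ → ℂ) n + (if 2 ≤ n then (y : ℕ → ℂ) (n - 2) else 0)‖₊ : ℝ≥0∞) ^ 2 := by
        intro n; rw [hpt n]
      rw [tsum_congr h1, tsum_split]
      congr 1
      · congr 2 <;> norm_num
    have hR1 : ENNReal.ofReal (‖T x‖ ^ 2)
        = W 2 * (‖(x : ℕ → ℂ) 0‖₊ : ℝ≥0∞) ^ 2 + W 3 * (‖(x : ℕ → ℂ) 1‖₊ : ℝ≥0∞) ^ 2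
          + ∑' n, W (n + 4) * (‖(x : ℕ → ℂ) (n + 2)‖₊ : ℝ≥0∞) ^ 2 := by
      rw [norm_sq_eq]
      have h1 : ∀ n, W n * (‖(T x : ℕ → ℂ) n‖₊ : ℝ≥0∞) ^ 2
          = W n * (‖(if 2 ≤ n then (x : ℕ → ℂ) (n - 2) else 0)‖₊ : ℝ≥0∞) ^ 2 := by
        intro n; rw [hT x n]
      rw [tsum_congr h1, tsum_split]
      have h0 : W 0 * (‖(if 2 ≤ 0 then (x : ℕ → ℂ) (0 - 2) else (0:ℂ))‖₊ : ℝ≥0∞) ^ 2 = 0 := by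
        norm_num
      have h1' : W 1 * (‖(if 2 ≤ 1 then (x : ℕ → ℂ) (1 - 2) else (0:ℂ))‖₊ : ℝ≥0∞) ^ 2 = 0 := by
        norm_num
      rw [h0, h1', zero_add, zero_add]
      have h2 : ∑' n, W (n + 2) * (‖(if 2 ≤ n + 2 then (x : ℕ → ℂ) (n + 2 - 2) else (0:ℂ))‖₊ : ℝ≥0∞) ^ 2
          = ∑' n, W (n + 2) * (‖(x : ℕ → ℂ) n‖₊ : ℝ≥0∞) ^ 2 :=
        tsum_congr fun n => by norm_num
      rw [h2, tsum_split (fun n => W (n + 2) * (‖(x : ℕ → ℂ) n‖₊ : ℝ≥0∞) ^ 2)]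
    have hR2 : ENNReal.ofReal (‖y‖ ^ 2) = ∑' n, W n * (‖(y : ℕ → ℂ) n‖₊ : ℝ≥0∞) ^ 2 :=
      norm_sq_eq y
    have key : ENNReal.ofReal (‖x + T y‖ ^ 2) ≤ ENNReal.ofReal (2 * (‖T x‖ ^ 2 + ‖y‖ ^ 2)) := by
      have hRHS : ENNReal.ofReal (2 * (‖T x‖ ^ 2 + ‖y‖ ^ 2))
          = (2 * (W 2 * (‖(x : ℕ → ℂ) 0‖₊ : ℝ≥0∞) ^ 2) + 2 * (W 3 * (‖(x : ℕ → ℂ) 1‖₊ : ℝ≥0∞) ^ 2))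
            + ∑' n, (2 * (W (n + 4) * (‖(x : ℕ → ℂ) (n + 2)‖₊ : ℝ≥0∞) ^ 2)
              + 2 * (W n * (‖(y : ℕ → ℂ) n‖₊ : ℝ≥0∞) ^ 2)) := by
        rw [ENNReal.ofReal_mul (by norm_num), ENNReal.ofReal_add (by positivity) (by positivity),
          hR1, hR2, ENNReal.ofReal_ofNat]
        have e1 : ∀ A B S1 S2 : ℝ≥0∞, 2 * (A + B + S1 + S2) = 2 * A + 2 * B + (2 * S1 + 2 * S2) := by
          intros; ring
        rw [e1, ← ENNReal.tsum_mul_left, ← ENNReal.tsum_mul_left, ← ENNReal.tsum_add]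
      rw [hL, hRHS]
      apply add_le_add
      · apply add_le_add
        · rw [← mul_assoc]
          apply mul_le_mul_left
          calc W 0 ≤ ENNReal.ofReal (2 * ω 2) := ENNReal.ofReal_le_ofReal ha
          _ = 2 * W 2 := by rw [ENNReal.ofReal_mul (by norm_num), ENNReal.ofReal_ofNat]
        · rw [← mul_assoc]
          apply mul_le_mul_left
          calc W 1 ≤ ENNReal.ofReal (2 * ω 3) := ENNReal.ofReal_le_ofReal hb
          _ = 2 * W 3 := by rw [ENNReal.ofReal_mul (by norm_num), ENNReal.ofReal_ofNat]
      · apply ENNReal.tsum_le_tsum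
        intro n
        have h' : 1 / ω n + 1 / ω (n + 4) ≤ 2 / ω (n + 2) := by
          have := hc (n + 2) (by omega)
          simpa using this
        exact core_enn (hω n) (hω (n + 2)) (hω (n + 4)) h' ((x : ℕ → ℂ) (n + 2)) ((y : ℕ → ℂ) n)
    exact (ENNReal.ofReal_le_ofReal_iff (by positivity)).mp key
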